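/- arXiv:2505.17939 — 4 statements merged into one kernel-verified Lean document; each statement's English description precedes it below -/
import Mathlib

section
/- Refinement by disjoint unions for relational Weisfeiler–Leman colorings: let S be a finite set, let 𝓐 = (R_a)_{a∈A} and 𝓑 = (Q_b)_{b∈B} be finite indexed families of binary relations on S, and suppose that for each b ∈ B there is a subset F_b ⊆ A such that the relations (R_a)_{a∈F_b} are pairwise disjoint and Q_b = ⋃_{a∈F_b} R_a. Then for every iteration l ≥ 0 and all σ, τ ∈ S, if a^l(σ) = a^l(τ) then b^l(σ) = b^l(τ), where a^l and b^l denote the canonical relational WL colorings of S with respect to 𝓐 and 𝓑 respectively. -/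
universe u v

/-- The type of canonical relational Weisfeiler–Leman colors at iteration `l`, for a
family of relations indexed by `P`.  At iteration `0` there is a single color `⋆`;
at iteration `l+1` a color is a pair of the previous color together with, for each
relation index `p`, a multiset of previous colors (of the `R_p`-neighbors). -/
def WLColorType (P : Type u) : ℕ → Type u
  | 0 => PUnit
  | l + 1 => WLColorType P l × (P → Multiset (WLColorType P l))

open scoped Classical in
/-- The canonical relational WL coloring of a finite set `S` equipped with a family of
binary relations `R : P → S → S → Prop`:
`c⁰ σ = ⋆` and `c^{l+1} σ = (c^l σ, (⟦ c^l τ : (σ,τ) ∈ R_p ⟧)_{p ∈ P})`. -/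
noncomputable def wlColor {S : Type v} {P : Type u} [Fintype S]
    (R : P → S → S → Prop) : (l : ℕ) → S → WLColorType P l
  | 0 => fun _ => PUnit.unit
  | l + 1 => fun σ =>
      (wlColor R l σ,
       fun p => ((Finset.univ.filter (fun τ => R p σ τ)).val).map (wlColor R l))

instance WLColorType.nonempty (P : Type u) : ∀ l : ℕ, Nonempty (WLColorType P l)
  | 0 => ⟨PUnit.unit⟩
  | l + 1 => ⟨((WLColorType.nonempty P l).some, fun _ => 0)⟩

lemma multiset_map_finsetSum {α β γ : Type*} (g : α → β) (s : Finset γ)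
    (m : γ → Multiset α) :
    Multiset.map g (∑ i ∈ s, m i) = ∑ i ∈ s, Multiset.map g (m i) := by
  classical
  induction s using Finset.induction with
  | empty => simp
  | insert _ _ h ih => simp [Finset.sum_insert h, ih]

/-- Refinement by disjoint unions for relational WL colorings: if every
relation `Q_b` of the family `𝓑` is a disjoint union `⋃_{a ∈ F b} R_a` of relations of
the family `𝓐`, then for every iteration `l`, elements identified by the canonical WL
coloring of `𝓐` are identified by the canonical WL coloring of `𝓑`. -/
theorem wlColor_refinement_by_disjoint_unions
    {S : Type*} {ι κ : Type*} [Fintype S] [Fintype ι] [Fintype κ]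
    (R : ι → S → S → Prop) (Q : κ → S → S → Prop) (F : κ → Set ι)
    (hdisj : ∀ b : κ, ∀ a₁ ∈ F b, ∀ a₂ ∈ F b, a₁ ≠ a₂ →
      ∀ σ τ : S, ¬ (R a₁ σ τ ∧ R a₂ σ τ))
    (hunion : ∀ (b : κ) (σ τ : S), Q b σ τ ↔ ∃ a ∈ F b, R a σ τ) :
    ∀ (l : ℕ) (σ τ : S), wlColor R l σ = wlColor R l τ →
      wlColor Q l σ = wlColor Q l τ := by
  classical
  intro l
  induction l with
  | zero => intro σ τ _; rfl
  | succ l ih =>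
    intro σ τ h
    simp only [wlColor] at h ⊢
    have h1 : wlColor R l σ = wlColor R l τ := congrArg Prod.fst h
    have h2 : ∀ a : ι,
        ((Finset.univ.filter (fun t => R a σ t)).val).map (wlColor R l) =
        ((Finset.univ.filter (fun t => R a τ t)).val).map (wlColor R l) :=
      fun a => congrFun (congrArg Prod.snd h) a
    refine Prod.ext (ih σ τ h1) ?_
    funext b
    -- a function transporting 𝓐-colors to 𝓑-colors
    set f : WLColorType ι l → WLColorType κ l := fun c =>
      if hc : ∃ s : S, wlColor R l s = c then wlColor Q l hc.choose
      else Classical.arbitrary _ with hfdef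
    have hf : ∀ s : S, f (wlColor R l s) = wlColor Q l s := by
      intro s
      have hex : ∃ s' : S, wlColor R l s' = wlColor R l s := ⟨s, rfl⟩
      simp only [hfdef, dif_pos hex]
      exact ih _ _ hex.choose_spec
    -- decomposition of the Q-neighbor multiset
    have key : ∀ x : S,
        ((Finset.univ.filter (fun t => Q b x t)).val) =
        ∑ a ∈ (F b).toFinset, ((Finset.univ.filter (fun t => R a x t)).val) := by
      intro x
      ext t
      rw [Multiset.count_sum']
      simp only [Finset.filter_val, Multiset.count_filter,
        Multiset.count_univ]
      by_cases hq : Q b x t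
      · obtain ⟨a, ha, hRa⟩ := (hunion b x t).mp hq
        rw [if_pos hq]
        rw [Finset.sum_eq_single_of_mem a (Set.mem_toFinset.mpr ha)]
        · rw [if_pos hRa]
        · intro a' ha' hne
          rw [if_neg]
          intro hRa'
          exact hdisj b a' (Set.mem_toFinset.mp ha') a ha hne x t ⟨hRa', hRa⟩
      · rw [if_neg hq]
        refine (Finset.sum_eq_zero fun a ha => ?_).symm
        rw [if_neg]
        intro hRa
        exact hq ((hunion b x t).mpr ⟨a, Set.mem_toFinset.mp ha, hRa⟩)
    have hmap : ∀ x : S,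
        ((Finset.univ.filter (fun t => Q b x t)).val).map (wlColor Q l) =
        ∑ a ∈ (F b).toFinset,
          (((Finset.univ.filter (fun t => R a x t)).val).map (wlColor R l)).map f := by
      intro x
      have : ((Finset.univ.filter (fun t => Q b x t)).val).map (wlColor Q l) =
          (((Finset.univ.filter (fun t => Q b x t)).val).map (wlColor R l)).map f := by
        rw [Multiset.map_map]
        exact Multiset.map_congr rfl (fun t _ => (hf t).symm)
      rw [this, key x, multiset_map_finsetSum, multiset_map_finsetSum]
    show Multiset.map (wlColor Q l) (Finset.univ.filter (fun t => Q b σ t)).val =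
      Multiset.map (wlColor Q l) (Finset.univ.filter (fun t => Q b τ t)).val
    rw [hmap σ, hmap τ]
    exact Finset.sum_congr rfl fun a _ => by rw [h2 a]
end

section
/- There exist two digraphs G = (V,E) and G' = (V',E'), each on 7 vertices with 14 edges and with every vertex having in-degree exactly 2 and out-degree exactly 2, such that G and G' are not isomorphic: the directed flag complex of G contains exactly 7 two-simplices (transitive 3-cliques), while the directed flag complex of G' contains none. -/
/-- Out-degree of a vertex in a digraph given by a finite edge set. -/
def outDeg {V : Type*} [Fintype V] [DecidableEq V] (E : Finset (V × V)) (v : V) : ℕ :=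
  (E.filter (fun e => e.1 = v)).card

/-- In-degree of a vertex in a digraph given by a finite edge set. -/
def inDeg {V : Type*} [Fintype V] [DecidableEq V] (E : Finset (V × V)) (v : V) : ℕ :=
  (E.filter (fun e => e.2 = v)).card

/-- The set of transitive 3-cliques of a digraph with edge set `E`: injective triples
`(u, v, w)` with `(u,v), (u,w), (v,w) ∈ E`.  These are exactly the 2-simplices of the
directed flag complex `K_G`. -/
def transTriples {V : Type*} [Fintype V] [DecidableEq V] (E : Finset (V × V)) :
    Finset (V × V × V) :=
  Finset.univ.filter (fun x : V × V × V =>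
    x.1 ≠ x.2.1 ∧ x.1 ≠ x.2.2 ∧ x.2.1 ≠ x.2.2 ∧
    (x.1, x.2.1) ∈ E ∧ (x.1, x.2.2) ∈ E ∧ (x.2.1, x.2.2) ∈ E)

/-- There exist two digraphs on 7 vertices, each with 14 edges and
with every vertex of in-degree exactly 2 and out-degree exactly 2, that are not
isomorphic: the directed flag complex of the first contains exactly 7 two-simplices
(transitive 3-cliques), while that of the second contains none. -/
theorem exists_regular_digraphs_distinguished_by_transitive_cliques :
    ∃ E E' : Finset (Fin 7 × Fin 7),
      (∀ e ∈ E, e.1 ≠ e.2) ∧ (∀ e ∈ E', e.1 ≠ e.2) ∧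
      E.card = 14 ∧ E'.card = 14 ∧
      (∀ v : Fin 7, outDeg E v = 2 ∧ inDeg E v = 2) ∧
      (∀ v : Fin 7, outDeg E' v = 2 ∧ inDeg E' v = 2) ∧
      (¬ ∃ ψ : Fin 7 ≃ Fin 7, ∀ u v : Fin 7, (u, v) ∈ E ↔ (ψ u, ψ v) ∈ E') ∧
      (transTriples E).card = 7 ∧
      (transTriples E').card = 0 := by

  refine ⟨Finset.univ.filter (fun e : Fin 7 × Fin 7 => e.2 = e.1 + 1 ∨ e.2 = e.1 + 2),
    Finset.univ.filter (fun e : Fin 7 × Fin 7 => e.2 = e.1 + 1 ∨ e.2 = e.1 + 3),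
    ?_, ?_, ?_, ?_, ?_, ?_, ?_, ?_, ?_⟩
  · decide
  · decide
  · decide
  · decide
  · decide
  · decide
  · rintro ⟨ψ, h⟩
    have h7 : (transTriples (Finset.univ.filter
        (fun e : Fin 7 × Fin 7 => e.2 = e.1 + 1 ∨ e.2 = e.1 + 2))).card = 7 := by decide
    have h0 : (transTriples (Finset.univ.filter
        (fun e : Fin 7 × Fin 7 => e.2 = e.1 + 1 ∨ e.2 = e.1 + 3))).card = 0 := by decide
    have hle : (transTriples (Finset.univ.filter
        (fun e : Fin 7 × Fin 7 => e.2 = e.1 + 1 ∨ e.2 = e.1 + 2))).card ≤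
        (transTriples (Finset.univ.filter
        (fun e : Fin 7 × Fin 7 => e.2 = e.1 + 1 ∨ e.2 = e.1 + 3))).card := by
      apply Finset.card_le_card_of_injOn (fun x => (ψ x.1, ψ x.2.1, ψ x.2.2))
      · rintro ⟨a, b, c⟩ hx
        simp only [Finset.mem_coe, transTriples, Finset.mem_filter, Finset.mem_univ, true_and] at hx ⊢
        obtain ⟨h1, h2, h3, h4, h5, h6⟩ := hx
        exact ⟨fun h' => h1 (ψ.injective h'), fun h' => h2 (ψ.injective h'),
          fun h' => h3 (ψ.injective h'), by simpa using (h a b).1 (by simpa using h4),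
          by simpa using (h a c).1 (by simpa using h5),
          by simpa using (h b c).1 (by simpa using h6)⟩
      · rintro ⟨a, b, c⟩ _ ⟨a', b', c'⟩ _ hxy
        simp only [Prod.mk.injEq] at hxy
        exact Prod.ext (ψ.injective hxy.1)
          (Prod.ext (ψ.injective hxy.2.1) (ψ.injective hxy.2.2))
    omega
  · decide
  · decide
end

section
/- There exist non-isomorphic digraphs G = (V,E) and G' = (V',E') with |V| = |V'| such that, for every iteration l, the multiset {{c^l_G(v) : v ∈ V}} of canonical relational WL colors of G computed with respect to the relation family (R_out, R_in) equals the corresponding multiset {{c^l_{G'}(v) : v ∈ V'}} for G', while the directed flag complexes K_G and K_{G'} have different numbers of 2-simplices and hence are non-isomorphic. -/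
universe u v

/-- The relation family `(R_out, R_in)` of a digraph with edge set `E`:
`R_out = E` and `R_in = {(u,v) : (v,u) ∈ E}`. -/
def dirFam {V : Type*} (E : Finset (V × V)) : Fin 2 → V → V → Prop :=
  fun p u v => if p = 0 then (u, v) ∈ E else (v, u) ∈ E

/-- Two disjoint bidirected triangles on `Fin 6`. -/
def Eaux : Finset (Fin 6 × Fin 6) :=
  {(0,1),(1,0),(0,2),(2,0),(1,2),(2,1),(3,4),(4,3),(3,5),(5,3),(4,5),(5,4)}

/-- A bidirected 6-cycle on `Fin 6`. -/
def E'aux : Finset (Fin 6 × Fin 6) :=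
  {(0,1),(1,0),(1,2),(2,1),(2,3),(3,2),(3,4),(4,3),(4,5),(5,4),(5,0),(0,5)}

lemma hcard12 : (transTriples Eaux).card = 12 := by decide

lemma hcard0 : (transTriples E'aux).card = 0 := by decide

open scoped Classical in
/-- If all WL out/in-degrees are constant (same constants for both graphs), the WL color
is the same constant for all vertices of both graphs, at every iteration. -/
lemma wl_const {S : Type v} {P : Type u} [Fintype S] (R R' : P → S → S → Prop)
    (d : P → ℕ)
    (h : ∀ p σ, (Finset.univ.filter (fun τ => R p σ τ)).card = d p)
    (h' : ∀ p σ, (Finset.univ.filter (fun τ => R' p σ τ)).card = d p) :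
    ∀ l : ℕ, ∃ c : WLColorType P l,
      (∀ σ, wlColor R l σ = c) ∧ (∀ σ, wlColor R' l σ = c) := by
  intro l
  induction l with
  | zero => exact ⟨PUnit.unit, fun _ => rfl, fun _ => rfl⟩
  | succ l ih =>
    obtain ⟨c, hc, hc'⟩ := ih
    refine ⟨(c, fun p => Multiset.replicate (d p) c), ?_, ?_⟩
    · intro σ
      show (wlColor R l σ, _) = _
      refine Prod.ext (hc σ) (funext fun p => ?_)
      show ((Finset.univ.filter (fun τ => R p σ τ)).val).map (wlColor R l) = _
      rw [Multiset.map_congr rfl (fun x _ => hc x), Multiset.map_const']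
      show Multiset.replicate (Finset.univ.filter (fun τ => R p σ τ)).card c = _
      rw [h p σ]
    · intro σ
      show (wlColor R' l σ, _) = _
      refine Prod.ext (hc' σ) (funext fun p => ?_)
      show ((Finset.univ.filter (fun τ => R' p σ τ)).val).map (wlColor R' l) = _
      rw [Multiset.map_congr rfl (fun x _ => hc' x), Multiset.map_const']
      show Multiset.replicate (Finset.univ.filter (fun τ => R' p σ τ)).card c = _
      rw [h' p σ]

/-- A concrete decidability instance for the relations of `dirFam`. -/
def dirFamDec (E : Finset (Fin 6 × Fin 6)) (p : Fin 2) (σ : Fin 6) :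
    DecidablePred fun τ => dirFam E p σ τ :=
  fun τ => inferInstanceAs (Decidable (if p = 0 then (σ, τ) ∈ E else (τ, σ) ∈ E))

open scoped Classical in
lemma degEaux : ∀ (p : Fin 2) (σ : Fin 6),
    (Finset.univ.filter (fun τ => dirFam Eaux p σ τ)).card = 2 := by
  intro p σ
  have h : Finset.univ.filter (fun τ => dirFam Eaux p σ τ) =
      @Finset.filter _ _ (dirFamDec Eaux p σ) Finset.univ := by congr!
  rw [h]
  clear h
  revert p σ; decide

open scoped Classical in
lemma degE'aux : ∀ (p : Fin 2) (σ : Fin 6),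
    (Finset.univ.filter (fun τ => dirFam E'aux p σ τ)).card = 2 := by
  intro p σ
  have h : Finset.univ.filter (fun τ => dirFam E'aux p σ τ) =
      @Finset.filter _ _ (dirFamDec E'aux p σ) Finset.univ := by congr!
  rw [h]
  clear h
  revert p σ; decide

/-- There exist non-isomorphic digraphs on the same number of vertices
whose canonical relational WL color multisets with respect to `(R_out, R_in)` agree at
every iteration, while their directed flag complexes have different numbers of
2-simplices (and hence are non-isomorphic). -/
theorem exists_wl_indistinguishable_digraphs_with_different_flag_complexes :
    ∃ (n : ℕ) (E E' : Finset (Fin n × Fin n)),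
      (∀ e ∈ E, e.1 ≠ e.2) ∧ (∀ e ∈ E', e.1 ≠ e.2) ∧
      (¬ ∃ ψ : Fin n ≃ Fin n, ∀ u v : Fin n, (u, v) ∈ E ↔ (ψ u, ψ v) ∈ E') ∧
      (∀ l : ℕ,
        Finset.univ.val.map (wlColor (dirFam E) l) =
          Finset.univ.val.map (wlColor (dirFam E') l)) ∧
      (transTriples E).card ≠ (transTriples E').card := by
  classical
  refine ⟨6, Eaux, E'aux, ?_, ?_, ?_, ?_, ?_⟩
  · decide
  · decide
  · rintro ⟨ψ, hψ⟩
    have hcard : (transTriples Eaux).card = (transTriples E'aux).card := by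
      refine Finset.card_bij (fun x _ => (ψ x.1, ψ x.2.1, ψ x.2.2)) ?_ ?_ ?_
      · intro x hx
        simp only [transTriples, Finset.mem_filter, Finset.mem_univ, true_and] at hx ⊢
        obtain ⟨h1, h2, h3, h4, h5, h6⟩ := hx
        exact ⟨fun h => h1 (ψ.injective h), fun h => h2 (ψ.injective h),
          fun h => h3 (ψ.injective h), (hψ _ _).1 h4, (hψ _ _).1 h5, (hψ _ _).1 h6⟩
      · intro x hx y hy h
        simp only [Prod.mk.injEq] at h
        exact Prod.ext (ψ.injective h.1) (Prod.ext (ψ.injective h.2.1) (ψ.injective h.2.2))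
      · intro y hy
        refine ⟨(ψ.symm y.1, ψ.symm y.2.1, ψ.symm y.2.2), ?_, ?_⟩
        · simp only [transTriples, Finset.mem_filter, Finset.mem_univ, true_and] at hy ⊢
          obtain ⟨h1, h2, h3, h4, h5, h6⟩ := hy
          refine ⟨fun h => h1 (ψ.symm.injective h), fun h => h2 (ψ.symm.injective h),
            fun h => h3 (ψ.symm.injective h), ?_, ?_, ?_⟩
          · rw [hψ]; simpa using h4
          · rw [hψ]; simpa using h5
          · rw [hψ]; simpa using h6
        · simp
    rw [hcard12, hcard0] at hcard
    exact absurd hcard (by norm_num)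
  · intro l
    obtain ⟨c, hc, hc'⟩ := wl_const (dirFam Eaux) (dirFam E'aux) (fun _ => 2)
      degEaux degE'aux l
    rw [Multiset.map_congr rfl (fun x _ => hc x), Multiset.map_congr rfl (fun x _ => hc' x)]
  · rw [hcard12, hcard0]; norm_num
end

section
/- The higher-order directed adjacency count does not factor through symmetrization: there exist directed simplicial complexes K and K' on finite vertex sets that are not isomorphic as directed simplicial complexes, whose symmetrizations π(K) and π(K') are isomorphic as abstract simplicial complexes, and such that the number of ordered pairs (σ,τ) of 2-simplices with d_0(σ) = d_2(τ) in K differs from the corresponding number in K'. -/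
/-- A (finite) directed simplicial complex on vertex type `V`, with directed simplices
represented as injective (nonempty, duplicate-free) lists: it contains every singleton
`[v]` and is closed under all face maps (deletion of the `i`-th vertex), which are
defined on simplices of dimension at least 1 (length at least 2). -/
def IsDirComplex {V : Type*} (K : Finset (List V)) : Prop :=
  (∀ σ ∈ K, σ ≠ [] ∧ σ.Nodup) ∧
  (∀ v : V, [v] ∈ K) ∧
  (∀ σ ∈ K, 1 < σ.length → ∀ i : Fin σ.length, σ.eraseIdx i ∈ K)

/-- The symmetrization `π(K)`: the abstract simplicial complex whose faces are the
underlying vertex sets of the directed simplices of `K`. -/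
def symmetrization {V : Type*} [DecidableEq V] (K : Finset (List V)) : Finset (Finset V) :=
  K.image List.toFinset

/-- The number of ordered pairs `(σ, τ)` of 2-simplices (length-3 directed simplices)
of `K` with `d_0 σ = d_2 τ`, i.e. the 0-th face of `σ` equals the 2-nd face of `τ`. -/
def d0d2PairCount {V : Type*} [DecidableEq V] (K : Finset (List V)) : ℕ :=
  ((K ×ˢ K).filter (fun p : List V × List V =>
    p.1.length = 3 ∧ p.2.length = 3 ∧ p.1.eraseIdx 0 = p.2.eraseIdx 2)).card

def myK : Finset (List (Fin 3)) := {[0],[1],[2],[0,1],[0,2],[1,2],[0,1,2]}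
def myK' : Finset (List (Fin 3)) :=
  {[0],[1],[2],[0,1],[0,2],[1,2],[2,0],[1,0],[0,1,2],[1,2,0]}

/-- The higher-order directed adjacency count does not factor through
symmetrization: there exist directed simplicial complexes `K`, `K'` on finite vertex
sets that are not isomorphic as directed simplicial complexes, whose symmetrizations
are isomorphic as abstract simplicial complexes, and such that the number of ordered
pairs `(σ, τ)` of 2-simplices with `d_0 σ = d_2 τ` differs between `K` and `K'`. -/
theorem d0d2_count_not_factor_through_symmetrization :
    ∃ (n n' : ℕ) (K : Finset (List (Fin n))) (K' : Finset (List (Fin n'))),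
      IsDirComplex K ∧ IsDirComplex K' ∧
      (¬ ∃ ψ : Fin n ≃ Fin n', ∀ σ : List (Fin n), σ ∈ K ↔ σ.map ψ ∈ K') ∧
      (∃ φ : Fin n ≃ Fin n', ∀ s : Finset (Fin n),
        s ∈ symmetrization K ↔ s.image φ ∈ symmetrization K') ∧
      d0d2PairCount K ≠ d0d2PairCount K' := by
  refine ⟨3, 3, myK, myK', ?_, ?_, ?_, ?_, ?_⟩
  · unfold IsDirComplex; decide
  · unfold IsDirComplex; decide
  · rintro ⟨ψ, h⟩
    have hK' : myK' = myK.image (List.map ψ) := by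
      ext τ
      simp only [Finset.mem_image]
      constructor
      · intro hτ
        refine ⟨τ.map ψ.symm, ?_, by simp⟩
        rw [h]; simpa using hτ
      · rintro ⟨σ, hσ, rfl⟩
        exact (h σ).mp hσ
    have hcard : myK'.card = myK.card := by
      rw [hK']
      exact Finset.card_image_of_injective _ (List.map_injective_iff.mpr ψ.injective)
    have h7 : myK.card = 7 := by decide
    have h10 : myK'.card = 10 := by decide
    omega
  · refine ⟨Equiv.refl _, fun s => ?_⟩
    have : symmetrization myK = symmetrization myK' := by decide
    simp [this]
  · decide
end
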